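/- Suppose δ^D(x) ≠ 0 for every x ∈ 𝒳. Then the inverse probability weighting identity holds: E[ Y · (2Z − 1) / ( δ^D(X) · f(Z | X) ) ] = Σ_{x∈𝒳} μ(X=x) · δ(x) = Δ, the average Wald estimand. -/

import Mathlib

open MeasureTheory

/-- Conditional mean of `W` given event `A`: `E[W | A] = (∫_A W dμ) / μ(A)`. -/
noncomputable def condMean {Ω : Type*} [MeasurableSpace Ω] (μ : Measure Ω)
    (W : Ω → ℝ) (A : Set Ω) : ℝ :=
  (∫ ω in A, W ω ∂μ) / (μ A).toReal

/-- if `δ^D(x) ≠ 0` for every `x`, then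
`E[ Y (2Z − 1) / (δ^D(X) f(Z | X)) ] = Σ_x μ(X=x) δ(x) = Δ`,
the average Wald estimand. -/
theorem ipw_average_wald_identity
    {Ω : Type*} [MeasurableSpace Ω] (μ : Measure Ω) [IsProbabilityMeasure μ]
    {𝒳 : Type*} [Fintype 𝒳] [MeasurableSpace 𝒳] [MeasurableSingletonClass 𝒳]
    (Z D Y : Ω → ℝ) (X : Ω → 𝒳)
    (hZmeas : Measurable Z) (hDmeas : Measurable D) (hXmeas : Measurable X)
    (hYmeas : Measurable Y)
    (hZ01 : ∀ ω, Z ω = 0 ∨ Z ω = 1) (hD01 : ∀ ω, D ω = 0 ∨ D ω = 1)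
    (hYint : Integrable Y μ)
    -- positivity
    (hPos : ∀ (z : ℝ), (z = 0 ∨ z = 1) → ∀ (x : 𝒳),
      0 < μ ({ω | Z ω = z} ∩ {ω | X ω = x}))
    -- f(z | x) = μ(Z = z | X = x)
    (f : ℝ → 𝒳 → ℝ)
    (hf : ∀ (z : ℝ) (x : 𝒳),
      f z x = (μ ({ω | Z ω = z} ∩ {ω | X ω = x})).toReal / (μ {ω | X ω = x}).toReal)
    -- p_z^Y, p_z^D, δ^Y, δ^D, and the conditional Wald estimand δ
    (pY pD : ℝ → 𝒳 → ℝ)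
    (hpY : ∀ (z : ℝ) (x : 𝒳),
      pY z x = condMean μ Y ({ω | Z ω = z} ∩ {ω | X ω = x}))
    (hpD : ∀ (z : ℝ) (x : 𝒳),
      pD z x = condMean μ D ({ω | Z ω = z} ∩ {ω | X ω = x}))
    (δY δD δ : 𝒳 → ℝ)
    (hδY : ∀ x, δY x = pY 1 x - pY 0 x)
    (hδD : ∀ x, δD x = pD 1 x - pD 0 x)
    (hδDne : ∀ x, δD x ≠ 0)
    (hδ : ∀ x, δ x = δY x / δD x)
    -- the average Wald estimand
    (Δ : ℝ) (hΔ : Δ = ∑ x : 𝒳, (μ {ω | X ω = x}).toReal * δ x) :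
    (∫ ω, Y ω * (2 * Z ω - 1) / (δD (X ω) * f (Z ω) (X ω)) ∂μ)
        = ∑ x : 𝒳, (μ {ω | X ω = x}).toReal * δ x
      ∧ (∫ ω, Y ω * (2 * Z ω - 1) / (δD (X ω) * f (Z ω) (X ω)) ∂μ) = Δ := by

  have key : (∫ ω, Y ω * (2 * Z ω - 1) / (δD (X ω) * f (Z ω) (X ω)) ∂μ)
      = ∑ x : 𝒳, (μ {ω | X ω = x}).toReal * δ x := by
    classical
    set g : Ω → ℝ := fun ω => Y ω * (2 * Z ω - 1) / (δD (X ω) * f (Z ω) (X ω)) with hg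
    set s : 𝒳 × Bool → Set Ω :=
      fun p => {ω | Z ω = (if p.2 then (1:ℝ) else 0)} ∩ {ω | X ω = p.1} with hs
    have hzv : ∀ b : Bool, ((if b then (1:ℝ) else 0) = 0 ∨ (if b then (1:ℝ) else 0) = 1) := by
      intro b; cases b <;> simp
    have hsm : ∀ p, MeasurableSet (s p) := by
      intro p
      exact (hZmeas (measurableSet_singleton _)).inter (hXmeas (measurableSet_singleton _))
    have hdisj : Pairwise (Function.onFun Disjoint s) := by
      intro p q hpq
      refine Set.disjoint_left.2 fun ω hωp hωq => hpq ?_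
      obtain ⟨hz1, hx1⟩ := hωp
      obtain ⟨hz2, hx2⟩ := hωq
      have hz1' : Z ω = (if p.2 then (1:ℝ) else 0) := hz1
      have hz2' : Z ω = (if q.2 then (1:ℝ) else 0) := hz2
      have hx1' : X ω = p.1 := hx1
      have hx2' : X ω = q.1 := hx2
      have hb : p.2 = q.2 := by
        cases hp2 : p.2 <;> cases hq2 : q.2 <;>
          simp only [hp2, hq2, if_true, if_false] at hz1' hz2' <;>
          first
          | rfl
          | (exfalso; rw [hz1'] at hz2'; norm_num at hz2')
      exact Prod.ext (hx1'.symm.trans hx2') hb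
    have hunion : (⋃ p, s p) = Set.univ := by
      ext ω
      simp only [Set.mem_iUnion, Set.mem_univ, iff_true]
      rcases hZ01 ω with h | h
      · exact ⟨(X ω, false), by simp [hs, h]⟩
      · exact ⟨(X ω, true), by simp [hs, h]⟩
    set c : 𝒳 × Bool → ℝ :=
      fun p => (2 * (if p.2 then (1:ℝ) else 0) - 1) /
        (δD p.1 * f (if p.2 then (1:ℝ) else 0) p.1) with hc
    have hgeq : ∀ p, Set.EqOn g (fun ω => c p * Y ω) (s p) := by
      intro p ω hω
      obtain ⟨hz, hx⟩ := hω
      rw [Set.mem_setOf_eq] at hz hx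
      simp only [hg, hc, hz, hx]
      ring
    have hint : ∀ p, IntegrableOn g (s p) μ := by
      intro p
      exact IntegrableOn.congr_fun ((hYint.const_mul (c p)).integrableOn)
        (fun ω hω => (hgeq p hω).symm) (hsm p)
    have h1 : (∫ ω, g ω ∂μ) = ∑ p : 𝒳 × Bool, ∫ ω in s p, g ω ∂μ := by
      rw [← setIntegral_univ, ← hunion, integral_iUnion_fintype hsm hdisj hint]
    -- measures
    have hmne : ∀ A : Set Ω, μ A ≠ ⊤ := fun A => measure_ne_top μ A
    have hmzx : ∀ b : Bool, ∀ x : 𝒳, (μ (s (x, b))).toReal ≠ 0 := by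
      intro b x
      exact (ENNReal.toReal_pos (hPos _ (hzv b) x).ne' (hmne _)).ne'
    have hmx : ∀ x : 𝒳, (μ {ω | X ω = x}).toReal ≠ 0 := by
      intro x
      have h1 : 0 < μ {ω | X ω = x} :=
        lt_of_lt_of_le (hPos 1 (Or.inr rfl) x) (measure_mono Set.inter_subset_right)
      exact (ENNReal.toReal_pos h1.ne' (hmne _)).ne'
    have h2 : ∀ p : 𝒳 × Bool, (∫ ω in s p, g ω ∂μ)
        = c p * (pY (if p.2 then 1 else 0) p.1 * (μ (s p)).toReal) := by
      intro p
      rw [setIntegral_congr_fun (hsm p) (hgeq p), integral_const_mul]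
      congr 1
      rw [hpY]
      unfold condMean
      rw [div_mul_cancel₀]
      exact hmzx p.2 p.1
    rw [h1]
    rw [Fintype.sum_congr _ _ h2, Fintype.sum_prod_type]
    refine Finset.sum_congr rfl fun x _ => ?_
    rw [Fintype.sum_bool]
    have hs1 : s (x, true) = {ω | Z ω = (1:ℝ)} ∩ {ω | X ω = x} := by simp [hs]
    have hs0 : s (x, false) = {ω | Z ω = (0:ℝ)} ∩ {ω | X ω = x} := by simp [hs]
    have m1 := hmzx true x
    have m0 := hmzx false x
    rw [hs1] at m1
    rw [hs0] at m0
    have mxne := hmx x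
    simp only [hs1, hs0, hc]
    norm_num
    rw [hδ, hδY, hf, hf]
    field_simp [m1, m0, mxne, hδDne x]
    ring
  exact ⟨key, by rw [key, hΔ]⟩
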